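/- Let N, M ≥ 2 be integers, P > 0, α > 0, φ, f, t ∈ ℝ, and let I(θ) be the 4×4 real matrix with entries [I(θ)]_{jk} = 2 Re Σ_{n=0}^{N−1} Σ_{m=0}^{M−1} conj(∂s_{n,m}/∂θ_j)·(∂s_{n,m}/∂θ_k), where s_{n,m}(θ) = √P·α·exp(i(φ + 2πnf − 2πmt)) and θ = (α, φ, f, t). Then I(θ) is symmetric positive definite. -/

import Mathlib

open Real Finset

/-- The noiseless OFDM radar observation `s_{n,m}(α,φ,f,t) = √P·α·exp(i(φ + 2πnf − 2πmt))`. -/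
noncomputable def ofdmSig (P : ℝ) (α φ f t : ℝ) (n m : ℕ) : ℂ :=
  (Real.sqrt P : ℂ) * (α : ℂ) *
    Complex.exp (Complex.I * ((φ : ℂ) + 2 * (π : ℂ) * (n : ℂ) * (f : ℂ)
      - 2 * (π : ℂ) * (m : ℂ) * (t : ℂ)))

/-- Partial derivative of `s_{n,m}` with respect to the `j`-th parameter of
`θ = (α, φ, f, t)`. -/
noncomputable def ofdmDs (P : ℝ) (α φ f t : ℝ) (j : Fin 4) (n m : ℕ) : ℂ :=
  match j with
  | 0 => deriv (fun a : ℝ => ofdmSig P a φ f t n m) α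
  | 1 => deriv (fun p : ℝ => ofdmSig P α p f t n m) φ
  | 2 => deriv (fun fr : ℝ => ofdmSig P α φ fr t n m) f
  | 3 => deriv (fun ti : ℝ => ofdmSig P α φ f ti n m) t

/-- The 4×4 Fisher information matrix
`[I(θ)]_{jk} = 2 Re Σ_{n,m} conj(∂s_{n,m}/∂θ_j)·(∂s_{n,m}/∂θ_k)`. -/
noncomputable def ofdmFisher (N M : ℕ) (P : ℝ) (α φ f t : ℝ) :
    Matrix (Fin 4) (Fin 4) ℝ :=
  Matrix.of fun j k =>
    2 * (∑ n ∈ Finset.range N, ∑ m ∈ Finset.range M,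
      (starRingEnd ℂ) (ofdmDs P α φ f t j n m) * ofdmDs P α φ f t k n m).re

/-! ### Auxiliary definitions and lemmas -/

/-- The phase factor `exp(i(φ + 2πnf − 2πmt))`. -/
noncomputable def ofdmE (φ f t : ℝ) (n m : ℕ) : ℂ :=
  Complex.exp (Complex.I * ((φ : ℂ) + 2 * (π : ℂ) * (n : ℂ) * (f : ℂ)
      - 2 * (π : ℂ) * (m : ℂ) * (t : ℂ)))

/-- Real part of the coefficient of the `j`-th partial derivative. -/
noncomputable def ofdmU (P α : ℝ) (j : Fin 4) (n m : ℕ) : ℝ :=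
  match j with
  | 0 => Real.sqrt P
  | _ => 0

/-- Imaginary part of the coefficient of the `j`-th partial derivative. -/
noncomputable def ofdmV (P α : ℝ) (j : Fin 4) (n m : ℕ) : ℝ :=
  match j with
  | 0 => 0
  | 1 => Real.sqrt P * α
  | 2 => Real.sqrt P * α * (2 * π * n)
  | 3 => -(Real.sqrt P * α * (2 * π * m))

lemma conjE_mul (φ f t : ℝ) (n m : ℕ) :
    (starRingEnd ℂ) (ofdmE φ f t n m) * ofdmE φ f t n m = 1 := by
  unfold ofdmE
  rw [← Complex.exp_conj, ← Complex.exp_add]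
  have : (starRingEnd ℂ) (Complex.I * ((φ : ℂ) + 2 * (π : ℂ) * (n : ℂ) * (f : ℂ)
      - 2 * (π : ℂ) * (m : ℂ) * (t : ℂ))) =
      -(Complex.I * ((φ : ℂ) + 2 * (π : ℂ) * (n : ℂ) * (f : ℂ)
      - 2 * (π : ℂ) * (m : ℂ) * (t : ℂ))) := by
    simp [map_mul, map_sub, map_add, Complex.conj_I, Complex.conj_ofReal, map_ofNat]
  rw [this, neg_add_cancel, Complex.exp_zero]

lemma hasDerivAt_coe (x : ℝ) : HasDerivAt (fun a : ℝ => (a : ℂ)) 1 x := by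
  exact Complex.ofRealCLM.hasDerivAt (x := x)

/-- Closed form of the partial derivatives. -/
lemma ofdmDs_eq (P α φ f t : ℝ) (j : Fin 4) (n m : ℕ) :
    ofdmDs P α φ f t j n m =
      ((ofdmU P α j n m : ℂ) + (ofdmV P α j n m : ℂ) * Complex.I) * ofdmE φ f t n m := by
  fin_cases j
  · show deriv (fun a : ℝ => ofdmSig P a φ f t n m) α = _
    have h : HasDerivAt (fun a : ℝ => ofdmSig P a φ f t n m)
        (((Real.sqrt P : ℂ)) * 1 * ofdmE φ f t n m) α := by
      exact (((hasDerivAt_coe α).const_mul ((Real.sqrt P : ℂ))).mul_const _)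
    rw [h.deriv]
    simp [ofdmU, ofdmV, ofdmE]
  · show deriv (fun p : ℝ => ofdmSig P α p f t n m) φ = _
    have h : HasDerivAt (fun p : ℝ => ofdmSig P α p f t n m)
        ((Real.sqrt P : ℂ) * (α : ℂ) * (ofdmE φ f t n m * (Complex.I * 1))) φ := by
      exact ((((((hasDerivAt_coe φ).add_const _).sub_const _).const_mul Complex.I).cexp).const_mul _)
    rw [h.deriv]
    simp [ofdmU, ofdmV, ofdmE]
    ring
  · show deriv (fun fr : ℝ => ofdmSig P α φ fr t n m) f = _
    have h : HasDerivAt (fun fr : ℝ => ofdmSig P α φ fr t n m)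
        ((Real.sqrt P : ℂ) * (α : ℂ) * (ofdmE φ f t n m *
          (Complex.I * ((2 * (π : ℂ) * (n : ℂ)) * 1)))) f := by
      exact (((((((hasDerivAt_coe f).const_mul (2 * (π : ℂ) * (n : ℂ))).const_add _).sub_const _).const_mul Complex.I).cexp).const_mul _)
    rw [h.deriv]
    simp [ofdmU, ofdmV, ofdmE]
    ring
  · show deriv (fun ti : ℝ => ofdmSig P α φ f ti n m) t = _
    have h : HasDerivAt (fun ti : ℝ => ofdmSig P α φ f ti n m)
        ((Real.sqrt P : ℂ) * (α : ℂ) * (ofdmE φ f t n m *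
          (Complex.I * (0 - (2 * (π : ℂ) * (m : ℂ)) * 1)))) t := by
      have h1 : HasDerivAt (fun ti : ℝ => ((φ : ℂ) + 2 * (π : ℂ) * (n : ℂ) * (f : ℂ)
          - 2 * (π : ℂ) * (m : ℂ) * (ti : ℂ))) (0 - (2 * (π : ℂ) * (m : ℂ)) * 1) t := by
        exact (hasDerivAt_const t _).sub ((hasDerivAt_coe t).const_mul _)
      exact (((h1.const_mul Complex.I).cexp).const_mul _)
    rw [h.deriv]
    simp [ofdmU, ofdmV, ofdmE]
    ring

/-- Real part of an individual term in the Fisher information matrix. -/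
lemma ofdm_term_re (P α φ f t : ℝ) (j k : Fin 4) (n m : ℕ) :
    ((starRingEnd ℂ) (ofdmDs P α φ f t j n m) * ofdmDs P α φ f t k n m).re =
      ofdmU P α j n m * ofdmU P α k n m + ofdmV P α j n m * ofdmV P α k n m := by
  rw [ofdmDs_eq, ofdmDs_eq]
  have hE := conjE_mul φ f t n m
  set E := ofdmE φ f t n m
  set a := ofdmU P α j n m
  set b := ofdmV P α j n m
  set c := ofdmU P α k n m
  set d := ofdmV P α k n m
  have : (starRingEnd ℂ) (((a:ℂ) + (b:ℂ) * Complex.I) * E) *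
      (((c:ℂ) + (d:ℂ) * Complex.I) * E)
      = ((starRingEnd ℂ) ((a:ℂ) + (b:ℂ) * Complex.I) * ((c:ℂ) + (d:ℂ) * Complex.I))
        * ((starRingEnd ℂ) E * E) := by
    rw [map_mul]; ring
  rw [this, hE, mul_one]
  simp [map_add, map_mul, Complex.conj_I, Complex.conj_ofReal, Complex.add_re,
    Complex.mul_re, Complex.ofReal_re, Complex.ofReal_im, Complex.I_re, Complex.I_im]

/-- Entry formula for the Fisher information matrix. -/
lemma ofdmFisher_apply (N M : ℕ) (P α φ f t : ℝ) (j k : Fin 4) :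
    ofdmFisher N M P α φ f t j k =
      2 * ∑ p ∈ Finset.range N ×ˢ Finset.range M,
        (ofdmU P α j p.1 p.2 * ofdmU P α k p.1 p.2
          + ofdmV P α j p.1 p.2 * ofdmV P α k p.1 p.2) := by
  show 2 * (∑ n ∈ Finset.range N, ∑ m ∈ Finset.range M,
      (starRingEnd ℂ) (ofdmDs P α φ f t j n m) * ofdmDs P α φ f t k n m).re = _
  rw [Complex.re_sum]
  simp only [Complex.re_sum, ofdm_term_re]
  rw [Finset.sum_product]

/-- The Fisher information matrix of the constant-envelope OFDM radar model with
parameters `θ = (α, φ, f, t)` is symmetric positive definite (hence invertible,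
so the Cramér-Rao lower bound is well defined). -/
theorem ofdm_fisher_posDef
    (N M : ℕ) (hN : 2 ≤ N) (hM : 2 ≤ M) (P : ℝ) (hP : 0 < P)
    (α : ℝ) (hα : 0 < α) (φ f t : ℝ) :
    (ofdmFisher N M P α φ f t).PosDef := by
  set S := Finset.range N ×ˢ Finset.range M with hS
  rw [Matrix.posDef_iff_dotProduct_mulVec]
  constructor
  · -- symmetry
    ext j k
    rw [Matrix.conjTranspose_apply]
    show star (ofdmFisher N M P α φ f t k j) = ofdmFisher N M P α φ f t j k
    rw [star_trivial, ofdmFisher_apply, ofdmFisher_apply]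
    congr 1
    exact Finset.sum_congr rfl fun p _ => by ring
  · intro x hx
    have hQ : dotProduct (star x) ((ofdmFisher N M P α φ f t).mulVec x) =
        2 * ∑ p ∈ S, ((∑ j, x j * ofdmU P α j p.1 p.2)^2
          + (∑ j, x j * ofdmV P α j p.1 p.2)^2) := by
      simp only [dotProduct, Matrix.mulVec, star_trivial, Pi.star_apply]
      have h1 : ∀ j : Fin 4, x j * (∑ k, ofdmFisher N M P α φ f t j k * x k) =
          ∑ p ∈ S, ∑ k, 2 * ((x j * ofdmU P α j p.1 p.2) * (x k * ofdmU P α k p.1 p.2)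
            + (x j * ofdmV P α j p.1 p.2) * (x k * ofdmV P α k p.1 p.2)) := by
        intro j
        rw [Finset.mul_sum, Finset.sum_comm]
        refine Finset.sum_congr rfl fun k _ => ?_
        rw [ofdmFisher_apply, Finset.mul_sum, Finset.sum_mul, Finset.mul_sum]
        exact Finset.sum_congr rfl fun p _ => by ring
      calc ∑ j, x j * (∑ k, ofdmFisher N M P α φ f t j k * x k)
          = ∑ j, ∑ p ∈ S, ∑ k, 2 * ((x j * ofdmU P α j p.1 p.2) * (x k * ofdmU P α k p.1 p.2)
            + (x j * ofdmV P α j p.1 p.2) * (x k * ofdmV P α k p.1 p.2)) :=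
            Finset.sum_congr rfl fun j _ => h1 j
        _ = ∑ p ∈ S, ∑ j, ∑ k, 2 * ((x j * ofdmU P α j p.1 p.2) * (x k * ofdmU P α k p.1 p.2)
            + (x j * ofdmV P α j p.1 p.2) * (x k * ofdmV P α k p.1 p.2)) := Finset.sum_comm
        _ = 2 * ∑ p ∈ S, ((∑ j, x j * ofdmU P α j p.1 p.2)^2
            + (∑ j, x j * ofdmV P α j p.1 p.2)^2) := by
            rw [Finset.mul_sum]
            refine Finset.sum_congr rfl fun p _ => ?_
            simp only [Fin.sum_univ_four]
            ring
    rw [hQ]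
    -- nonnegativity of each summand
    have hnonneg : ∀ p ∈ S, 0 ≤ (∑ j, x j * ofdmU P α j p.1 p.2)^2
        + (∑ j, x j * ofdmV P α j p.1 p.2)^2 := fun p _ =>
      add_nonneg (sq_nonneg _) (sq_nonneg _)
    -- strict positivity: suppose the sum were zero
    rcases eq_or_lt_of_le (Finset.sum_nonneg hnonneg) with h0 | hpos
    · exfalso
      have hterm : ∀ p ∈ S, (∑ j, x j * ofdmU P α j p.1 p.2)^2
          + (∑ j, x j * ofdmV P α j p.1 p.2)^2 = 0 :=
        (Finset.sum_eq_zero_iff_of_nonneg hnonneg).mp h0.symm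
      have hsP : Real.sqrt P ≠ 0 := ne_of_gt (Real.sqrt_pos.mpr hP)
      have hmem : ∀ n m : ℕ, n < N → m < M → ((n, m) : ℕ × ℕ) ∈ S := by
        intro n m hn hm
        simp [hS, Finset.mem_product, Finset.mem_range, hn, hm]
      have key : ∀ n m : ℕ, n < N → m < M →
          (∑ j, x j * ofdmU P α j n m) = 0 ∧ (∑ j, x j * ofdmV P α j n m) = 0 := by
        intro n m hn hm
        have := hterm (n, m) (hmem n m hn hm)
        constructor
        · nlinarith [sq_nonneg (∑ j, x j * ofdmU P α j n m),
            sq_nonneg (∑ j, x j * ofdmV P α j n m)]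
        · nlinarith [sq_nonneg (∑ j, x j * ofdmU P α j n m),
            sq_nonneg (∑ j, x j * ofdmV P α j n m)]
      have h1N : 1 < N := lt_of_lt_of_le one_lt_two hN
      have h1M : 1 < M := lt_of_lt_of_le one_lt_two hM
      have h0N : 0 < N := lt_trans one_pos h1N
      have h0M : 0 < M := lt_trans one_pos h1M
      have e00 := key 0 0 h0N h0M
      have e10 := key 1 0 h1N h0M
      have e01 := key 0 1 h0N h1M
      have hx0 : x 0 = 0 := by
        have := e00.1
        simp only [Fin.sum_univ_four, ofdmU] at this
        have : x 0 * Real.sqrt P = 0 := by linarith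
        exact (mul_eq_zero.mp this).resolve_right hsP
      have hπ : (0:ℝ) < 2 * π := by positivity
      have hcoef : Real.sqrt P * α ≠ 0 := by positivity
      have hv00 := e00.2
      have hv10 := e10.2
      have hv01 := e01.2
      simp only [Fin.sum_univ_four, ofdmV] at hv00 hv10 hv01
      push_cast at hv00 hv10 hv01
      have hx1 : x 1 = 0 := by
        have h : x 1 * (Real.sqrt P * α) = 0 := by linarith [hv00]
        exact (mul_eq_zero.mp h).resolve_right hcoef
      have hx2 : x 2 = 0 := by
        have h : x 2 * (Real.sqrt P * α * (2 * π)) = 0 := by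
          nlinarith [hv10, hv00]
        have hc : Real.sqrt P * α * (2 * π) ≠ 0 := by positivity
        exact (mul_eq_zero.mp h).resolve_right hc
      have hx3 : x 3 = 0 := by
        have h : x 3 * (Real.sqrt P * α * (2 * π)) = 0 := by
          nlinarith [hv01, hv00]
        have hc : Real.sqrt P * α * (2 * π) ≠ 0 := by positivity
        exact (mul_eq_zero.mp h).resolve_right hc
      apply hx
      funext j
      fin_cases j <;> assumption
    · positivity
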